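/- For 0 < z < 1/2, the limit of Z̃_n(z) · (z(1-z))^n as n → ∞ equals (1-2z)/(1-z); i.e. Z̃_n(z) ~ ((1-2z)/(1-z)) · (z(1-z))^{-n}. -/

import Mathlib

open Filter

/-- Ballot number B_{m,q}, with B_{0,0} = 1 and B_{m,q} = 0 for q > m. -/
noncomputable def Bq (m q : ℕ) : ℝ :=
  if m = 0 then (if q = 0 then 1 else 0)
  else if q ≤ m then
    (q : ℝ) * (2 * m - q - 1).factorial / ((m.factorial : ℝ) * (m - q).factorial)
  else 0

/-- One-sided contact generating function Z̃_m(z) = ∑_q B_{m,q} z^{-q}. -/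
noncomputable def Zt (m : ℕ) (z : ℝ) : ℝ := ∑ q ∈ Finset.range (m + 1), Bq m q * z⁻¹ ^ q

lemma Bq_gt (m q : ℕ) (h : m < q) : Bq m q = 0 := by
  unfold Bq
  rcases Nat.eq_zero_or_pos m with hm | hm
  · subst hm; simp; omega
  · rw [if_neg (by omega), if_neg (by omega)]

lemma Bq_diag (m : ℕ) : Bq m m = 1 := by
  unfold Bq
  rcases Nat.eq_zero_or_pos m with hm | hm
  · subst hm; simp
  · rw [if_neg (by omega), if_pos le_rfl]
    have h1 : 2 * m - m - 1 = m - 1 := by omega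
    have h2 : m - m = 0 := by omega
    rw [h1, h2]
    obtain ⟨k, rfl⟩ : ∃ k, m = k + 1 := ⟨m - 1, by omega⟩
    have : ((k+1).factorial : ℝ) = (k+1) * k.factorial := by
      rw [Nat.factorial_succ]; push_cast; ring
    simp [this]
    exact ⟨(by positivity : (k:ℝ) + 1 ≠ 0), Nat.factorial_ne_zero k⟩

lemma Bq_one (n : ℕ) : Bq (n+1) 1 = catalan n := by
  unfold Bq
  rw [if_neg (by omega), if_pos (by omega)]
  have h1 : 2 * (n+1) - 1 - 1 = 2 * n := by omega
  have h2 : n + 1 - 1 = n := by omega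
  rw [h1, h2]
  have key : catalan n * (n+1).factorial * n.factorial = (2*n).factorial := by
    have h3 : (2*n).choose n * n.factorial * (2*n - n).factorial = (2*n).factorial :=
      Nat.choose_mul_factorial_mul_factorial (by omega)
    have h4 : (n + 1) * catalan n = n.centralBinom := succ_mul_catalan_eq_centralBinom n
    have h5 : 2*n - n = n := by omega
    rw [h5] at h3
    calc catalan n * (n+1).factorial * n.factorial
        = ((n+1) * catalan n) * n.factorial * n.factorial := by
          rw [Nat.factorial_succ]; ring
      _ = n.centralBinom * n.factorial * n.factorial := by rw [h4]
      _ = (2*n).factorial := by rw [Nat.centralBinom]; exact h3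
  have := congrArg (fun x : ℕ => (x : ℝ)) key
  push_cast at this
  field_simp
  push_cast
  linarith [this]

lemma Bq_eq (m q : ℕ) (hm : m ≠ 0) (hq : q ≤ m) :
    Bq m q = (q : ℝ) * (2 * m - q - 1).factorial / ((m.factorial : ℝ) * (m - q).factorial) := by
  unfold Bq; rw [if_neg hm, if_pos hq]

lemma Bq_rec (n q : ℕ) (hq : q ≤ n) :
    Bq (n+1) (q+1) - Bq (n+1) (q+2) = Bq n q := by
  rcases eq_or_lt_of_le hq with rfl | hlt
  · rw [Bq_diag, Bq_gt (q+1) (q+2) (by omega), Bq_diag]; ring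
  · obtain ⟨b, rfl⟩ : ∃ b, n = q + b + 1 := ⟨n - q - 1, by omega⟩
    rw [Bq_eq (q+b+1+1) (q+1) (by omega) (by omega),
        Bq_eq (q+b+1+1) (q+2) (by omega) (by omega),
        Bq_eq (q+b+1) q (by omega) (by omega)]
    have e1 : 2 * (q+b+1+1) - (q+1) - 1 = q + 2*b + 2 := by omega
    have e2 : (q+b+1+1) - (q+1) = b+1 := by omega
    have e3 : 2 * (q+b+1+1) - (q+2) - 1 = q + 2*b + 1 := by omega
    have e4 : (q+b+1+1) - (q+2) = b := by omega
    have e5 : 2 * (q+b+1) - q - 1 = q + 2*b + 1 := by omega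
    have e6 : (q+b+1) - q = b + 1 := by omega
    rw [e1, e2, e3, e4, e5, e6]
    have f1 : ((q+2*b+2).factorial : ℝ) = (q+2*b+2) * (q+2*b+1).factorial := by
      rw [show q+2*b+2 = (q+2*b+1)+1 by ring, Nat.factorial_succ]; push_cast; ring
    have f2 : ((q+b+1+1).factorial : ℝ) = (q+b+2) * (q+b+1).factorial := by
      rw [Nat.factorial_succ]; push_cast; ring
    have f3 : ((b+1).factorial : ℝ) = (b+1) * b.factorial := by
      rw [Nat.factorial_succ]; push_cast; ring
    rw [f1, f2, f3]
    have p1 : ((q+2*b+1).factorial : ℝ) ≠ 0 := Nat.cast_ne_zero.mpr (Nat.factorial_ne_zero _)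
    have p2 : ((q+b+1).factorial : ℝ) ≠ 0 := Nat.cast_ne_zero.mpr (Nat.factorial_ne_zero _)
    have p3 : (b.factorial : ℝ) ≠ 0 := Nat.cast_ne_zero.mpr (Nat.factorial_ne_zero _)
    have p4 : ((q:ℝ)+b+2) ≠ 0 := by positivity
    have p5 : ((b:ℝ)+1) ≠ 0 := by positivity
    push_cast
    field_simp
    ring

lemma Zt_rec (n : ℕ) (z : ℝ) (hz : z ≠ 0) :
    Zt (n+1) z * (z * (1 - z)) = Zt n z - z * catalan n := by
  have hzi : ∀ q : ℕ, z * z⁻¹ ^ (q+1) = z⁻¹ ^ q := fun q => by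
    rw [pow_succ', ← mul_assoc, mul_inv_cancel₀ hz, one_mul]
  have h0 : Bq (n+1) 0 = 0 := by rw [Bq_eq _ 0 (by omega) (by omega)]; simp
  have step1 : Zt (n+1) z * (z * (1 - z))
      = ∑ q ∈ Finset.range (n+1), Bq (n+1) (q+1) * z⁻¹ ^ (q+1) * (z * (1-z)) := by
    unfold Zt
    rw [Finset.sum_mul,
      Finset.sum_range_succ' (fun i => Bq (n+1) i * z⁻¹ ^ i * (z * (1-z))) (n+1)]
    rw [h0]; simp
  have step2 : ∑ q ∈ Finset.range (n+1), Bq (n+1) (q+1) * z⁻¹ ^ (q+1) * (z * (1-z))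
      = ∑ q ∈ Finset.range (n+1), Bq (n+1) (q+1) * z⁻¹ ^ q
        - z * ∑ q ∈ Finset.range (n+1), Bq (n+1) (q+1) * z⁻¹ ^ q := by
    rw [Finset.mul_sum, ← Finset.sum_sub_distrib]
    refine Finset.sum_congr rfl fun q _ => ?_
    calc Bq (n+1) (q+1) * z⁻¹ ^ (q+1) * (z * (1-z))
        = Bq (n+1) (q+1) * (z * z⁻¹ ^ (q+1)) * (1-z) := by ring
      _ = Bq (n+1) (q+1) * z⁻¹ ^ q * (1-z) := by rw [hzi]
      _ = Bq (n+1) (q+1) * z⁻¹ ^ q - z * (Bq (n+1) (q+1) * z⁻¹ ^ q) := by ring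
  have step3 : z * ∑ q ∈ Finset.range (n+1), Bq (n+1) (q+1) * z⁻¹ ^ q
      = ∑ q ∈ Finset.range (n+1), Bq (n+1) (q+2) * z⁻¹ ^ q + z * catalan n := by
    rw [Finset.sum_range_succ' (fun q => Bq (n+1) (q+1) * z⁻¹ ^ q) n]
    rw [Bq_one]
    rw [Finset.sum_range_succ (fun q => Bq (n+1) (q+2) * z⁻¹ ^ q) n]
    rw [Bq_gt (n+1) (n+2) (by omega)]
    rw [mul_add, Finset.mul_sum]
    simp only [pow_zero, mul_one, zero_mul, add_zero]
    congr 1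
    refine Finset.sum_congr rfl fun i _ => ?_
    calc z * (Bq (n+1) (i+1+1) * z⁻¹ ^ (i+1))
        = Bq (n+1) (i+2) * (z * z⁻¹ ^ (i+1)) := by ring
      _ = Bq (n+1) (i+2) * z⁻¹ ^ i := by rw [hzi]
  rw [step1, step2, step3]
  have step4 : ∑ q ∈ Finset.range (n+1), Bq (n+1) (q+1) * z⁻¹ ^ q
      - ∑ q ∈ Finset.range (n+1), Bq (n+1) (q+2) * z⁻¹ ^ q = Zt n z := by
    rw [← Finset.sum_sub_distrib]
    unfold Zt
    refine Finset.sum_congr rfl fun q hq => ?_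
    rw [← sub_mul, Bq_rec n q (by simpa [Nat.lt_succ_iff] using Finset.mem_range.mp hq)]
  linarith [step4]

lemma Zt_identity (n : ℕ) (z : ℝ) (hz : z ≠ 0) :
    Zt n z * (z * (1 - z)) ^ n
      = 1 - z * ∑ k ∈ Finset.range n, (catalan k : ℝ) * (z * (1 - z)) ^ k := by
  induction n with
  | zero => simp [Zt, Bq]
  | succ n ih =>
      have : Zt (n+1) z * (z * (1 - z)) ^ (n+1)
          = (Zt (n+1) z * (z * (1-z))) * (z * (1-z)) ^ n := by ring
      rw [this, Zt_rec n z hz, sub_mul, ih, Finset.sum_range_succ]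
      ring

lemma catalan_le_four_pow (k : ℕ) : (catalan k : ℝ) ≤ 4 ^ k := by
  have h1 : catalan k ≤ k.centralBinom := by
    calc catalan k ≤ (k+1) * catalan k := Nat.le_mul_of_pos_left _ (by omega)
      _ = k.centralBinom := succ_mul_catalan_eq_centralBinom k
  have h2 : k.centralBinom ≤ 4 ^ k := by
    calc k.centralBinom = (2*k).choose k := rfl
      _ ≤ (2*k+1).choose k := Nat.choose_le_choose _ (by omega)
      _ ≤ 4 ^ k := Nat.choose_middle_le_pow k
  calc (catalan k : ℝ) ≤ (k.centralBinom : ℝ) := by exact_mod_cast h1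
    _ ≤ ((4^k : ℕ) : ℝ) := by exact_mod_cast h2
    _ = 4 ^ k := by push_cast; ring

lemma cat_summable {x : ℝ} (hx0 : 0 ≤ x) (hx : x < 1/4) :
    Summable (fun k => (catalan k : ℝ) * x ^ k) := by
  refine Summable.of_nonneg_of_le (fun k => by positivity) (fun k => ?_)
    (summable_geometric_of_lt_one (r := 4*x) (by positivity) (by linarith))
  calc (catalan k:ℝ) * x ^ k ≤ 4^k * x^k :=
        mul_le_mul_of_nonneg_right (catalan_le_four_pow k) (by positivity)
    _ = (4*x)^k := by rw [mul_pow]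

lemma cat_tsum_eq {x : ℝ} (hx0 : 0 ≤ x) (hx : x < 1/4) :
    x * (∑' k, (catalan k : ℝ) * x ^ k) ^ 2 = (∑' k, (catalan k : ℝ) * x ^ k) - 1 := by
  set f : ℕ → ℝ := fun k => (catalan k : ℝ) * x ^ k with hf
  have hs : Summable f := cat_summable hx0 hx
  have hnorm : Summable (fun k => ‖f k‖) := by
    have : (fun k => ‖f k‖) = f := funext fun k => by
      rw [Real.norm_eq_abs, abs_of_nonneg (by positivity)]
    rw [this]; exact hs
  have hsq : (∑' k, f k) * (∑' k, f k)
      = ∑' n, ∑ kl ∈ Finset.HasAntidiagonal.antidiagonal n, f kl.1 * f kl.2 :=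
    tsum_mul_tsum_eq_tsum_sum_antidiagonal_of_summable_norm hnorm hnorm
  have inner : ∀ n, ∑ kl ∈ Finset.HasAntidiagonal.antidiagonal n, f kl.1 * f kl.2
      = (catalan (n+1) : ℝ) * x ^ n := by
    intro n
    rw [catalan_succ']
    push_cast
    rw [Finset.sum_mul]
    refine Finset.sum_congr rfl fun kl hkl => ?_
    have hn := Finset.HasAntidiagonal.mem_antidiagonal.mp hkl
    calc f kl.1 * f kl.2
        = ((catalan kl.1 : ℝ) * (catalan kl.2 : ℝ)) * (x ^ kl.1 * x ^ kl.2) := by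
          simp only [hf]; ring
      _ = (catalan kl.1 : ℝ) * (catalan kl.2 : ℝ) * x ^ n := by rw [← pow_add, hn]
  have h1 : (∑' k, f k) ^ 2 = ∑' n, (catalan (n+1) : ℝ) * x ^ n := by
    rw [pow_two, hsq]
    exact tsum_congr inner
  have h2 : x * ∑' n, (catalan (n+1) : ℝ) * x ^ n = ∑' n, f (n+1) := by
    rw [← tsum_mul_left]
    refine tsum_congr fun n => ?_
    simp only [hf]
    rw [pow_succ]; ring
  have h3 : ∑' k, f k = f 0 + ∑' n, f (n+1) := Summable.tsum_eq_zero_add hs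
  have hf0 : f 0 = 1 := by simp [hf]
  rw [h1, h2]
  rw [hf0] at h3
  linarith

lemma cat_tsum_val (z : ℝ) (hz0 : 0 < z) (hz : z < 1/2) :
    (∑' k, (catalan k : ℝ) * (z*(1-z)) ^ k) = 1 / (1-z) := by
  have hD0 : (0:ℝ) ≤ z*(1-z) := by nlinarith
  have hD4 : z*(1-z) < 1/4 := by nlinarith
  have hq := cat_tsum_eq hD0 hD4
  set S := ∑' k, (catalan k : ℝ) * (z*(1-z)) ^ k with hS
  have hfac : (2*(z*(1-z))*S - 1 - (1-2*z)) * (2*(z*(1-z))*S - 1 + (1-2*z)) = 0 := by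
    nlinarith [hq]
  have hS1 : (1:ℝ) ≤ S := by
    have := Summable.le_tsum (cat_summable hD0 hD4) 0 (fun j _ => by positivity)
    simpa using this
  rcases mul_eq_zero.mp hfac with hbad | hgood
  · -- bad root: derive contradiction
    exfalso
    set x : ℝ := (z*(1-z) + 1/4)/2 with hx
    have hx0 : (0:ℝ) ≤ x := by positivity
    have hx4 : x < 1/4 := by rw [hx]; linarith
    have hDx : z*(1-z) < x := by rw [hx]; linarith
    have hq' := cat_tsum_eq hx0 hx4
    set T := ∑' k, (catalan k : ℝ) * x ^ k with hT
    have hsq' : (2*x*T - 1)^2 = 1 - 4*x := by nlinarith [hq']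
    have bound1 : 2*x*T - 1 ≤ Real.sqrt (1 - 4*x) := by
      have h := le_abs_self (2*x*T - 1)
      rwa [← Real.sqrt_sq_eq_abs, hsq'] at h
    have bound2 : Real.sqrt (1 - 4*x) < 1 - 2*z := by
      have h1 : (1:ℝ) - 4*x < (1-2*z)^2 := by nlinarith
      have h2 : Real.sqrt (1 - 4*x) < Real.sqrt ((1-2*z)^2) :=
        Real.sqrt_lt_sqrt (by linarith) h1
      rwa [Real.sqrt_sq (by linarith)] at h2
    have hST : S ≤ T := by
      refine Summable.tsum_le_tsum (fun k => ?_) (cat_summable hD0 hD4) (cat_summable hx0 hx4)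
      have : (z*(1-z))^k ≤ x^k := pow_le_pow_left₀ hD0 hDx.le k
      have hc : (0:ℝ) ≤ (catalan k : ℝ) := by positivity
      nlinarith
    nlinarith [hbad, bound1, bound2, hST, hS1, hDx]
  · have hz1 : (1:ℝ) - z ≠ 0 := by intro h; nlinarith
    field_simp
    nlinarith [hgood]

/-- For 0 < z < 1/2, Z̃ₙ(z) ~ ((1-2z)/(1-z)) (z(1-z))^{-n}. -/
theorem one_sided_asymptotics_low (z : ℝ) (hz0 : 0 < z) (hz : z < 1 / 2) :
    Tendsto (fun n : ℕ => Zt n z * (z * (1 - z)) ^ n) atTop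
      (nhds ((1 - 2 * z) / (1 - z))) := by
  have hD0 : (0:ℝ) ≤ z*(1-z) := by nlinarith
  have hD4 : z*(1-z) < 1/4 := by nlinarith
  have hs := cat_summable hD0 hD4
  have hlim : Tendsto (fun n => ∑ k ∈ Finset.range n, (catalan k:ℝ)*(z*(1-z))^k)
      atTop (nhds (1/(1-z))) := by
    rw [← cat_tsum_val z hz0 hz]
    exact hs.hasSum.tendsto_sum_nat
  have heq : (fun n : ℕ => Zt n z * (z*(1-z))^n)
      = fun n => 1 - z * ∑ k ∈ Finset.range n, (catalan k:ℝ)*(z*(1-z))^k :=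
    funext fun n => Zt_identity n z (ne_of_gt hz0)
  have hval : (1-2*z)/(1-z) = 1 - z * (1/(1-z)) := by
    have : (1:ℝ) - z ≠ 0 := by intro h; nlinarith
    field_simp
    ring
  rw [heq, hval]
  exact (hlim.const_mul z).const_sub 1
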